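/- arXiv:2007.08307 — 4 statements merged into one kernel-verified Lean document; each statement's English description precedes it below -/
import Mathlib

section
/- Consider a rewriting system given by the union of several deterministic sub-relations A, B, C, D, E with a priority order, where a step of a lower-priority relation is only allowed when no higher-priority step applies. If the composite pairs B∘A, C∘A, C∘B, D∘(anything), E∘B, E∘C, E∘D, E∘E, and E∘A*∘X for X ∈ {B,C,D,E} are all empty (as relations, reading left to right in reduction order), then the reflexive-transitive closure of the combined relation factors as A* ∘ B* ∘ C* ∘ (D? ∪ E? ∘ A*). -/
open Relation

variable {α : Type*}

/-- Prioritized B-step: allowed only when no A-step applies. -/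
def PrioB (A B : α → α → Prop) (a b : α) : Prop :=
  (∀ c, ¬ A a c) ∧ B a b

/-- Prioritized C-step: allowed only when no A- or B-step applies. -/
def PrioC (A B C : α → α → Prop) (a b : α) : Prop :=
  (∀ c, ¬ A a c) ∧ (∀ c, ¬ B a c) ∧ C a b

/-- Prioritized D-step: allowed only when no A-, B- or C-step applies. -/
def PrioD (A B C D : α → α → Prop) (a b : α) : Prop :=
  (∀ c, ¬ A a c) ∧ (∀ c, ¬ B a c) ∧ (∀ c, ¬ C a c) ∧ D a b

/-- Prioritized E-step: allowed only when no A-, B-, C- or D-step applies. -/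
def PrioE (A B C D E : α → α → Prop) (a b : α) : Prop :=
  (∀ c, ¬ A a c) ∧ (∀ c, ¬ B a c) ∧ (∀ c, ¬ C a c) ∧ (∀ c, ¬ D a c) ∧ E a b

/-- The combined prioritized reduction relation. -/
def PrioStep (A B C D E : α → α → Prop) (a b : α) : Prop :=
  A a b ∨ PrioB A B a b ∨ PrioC A B C a b ∨ PrioD A B C D a b ∨ PrioE A B C D E a b

/-- If the listed composite reduction pairs/triples of the prioritized system are
empty, then the reflexive-transitive closure of the combined relation factors as
`A* ∘ B* ∘ C* ∘ (D? ∪ E? ∘ A*)`. -/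
theorem prioritized_factorization (A B C D E : α → α → Prop)
    (hdetA : ∀ a b b', A a b → A a b' → b = b')
    (hdetB : ∀ a b b', B a b → B a b' → b = b')
    (hdetC : ∀ a b b', C a b → C a b' → b = b')
    (hdetD : ∀ a b b', D a b → D a b' → b = b')
    (hdetE : ∀ a b b', E a b → E a b' → b = b')
    (hBA : ∀ a b c, PrioB A B a b → A b c → False)
    (hCA : ∀ a b c, PrioC A B C a b → A b c → False)
    (hCB : ∀ a b c, PrioC A B C a b → PrioB A B b c → False)
    (hD : ∀ a b c, PrioD A B C D a b → PrioStep A B C D E b c → False)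
    (hEB : ∀ a b c, PrioE A B C D E a b → PrioB A B b c → False)
    (hEC : ∀ a b c, PrioE A B C D E a b → PrioC A B C b c → False)
    (hED : ∀ a b c, PrioE A B C D E a b → PrioD A B C D b c → False)
    (hEE : ∀ a b c, PrioE A B C D E a b → PrioE A B C D E b c → False)
    (hEAB : ∀ a b c d, PrioE A B C D E a b → ReflTransGen A b c → PrioB A B c d → False)
    (hEAC : ∀ a b c d, PrioE A B C D E a b → ReflTransGen A b c → PrioC A B C c d → False)
    (hEAD : ∀ a b c d, PrioE A B C D E a b → ReflTransGen A b c → PrioD A B C D c d → False)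
    (hEAE : ∀ a b c d, PrioE A B C D E a b → ReflTransGen A b c → PrioE A B C D E c d → False) :
    ∀ a b : α, ReflTransGen (PrioStep A B C D E) a b ↔
      ∃ x y z : α, ReflTransGen A a x ∧ ReflTransGen (PrioB A B) x y ∧
        ReflTransGen (PrioC A B C) y z ∧
        (ReflGen (PrioD A B C D) z b ∨
          ∃ w : α, ReflGen (PrioE A B C D E) z w ∧ ReflTransGen A w b) := by

  have stepA : ∀ {a b}, A a b → PrioStep A B C D E a b := fun h => Or.inl h
  have stepB : ∀ {a b}, PrioB A B a b → PrioStep A B C D E a b := fun h => Or.inr (Or.inl h)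
  have stepC : ∀ {a b}, PrioC A B C a b → PrioStep A B C D E a b :=
    fun h => Or.inr (Or.inr (Or.inl h))
  have stepD : ∀ {a b}, PrioD A B C D a b → PrioStep A B C D E a b :=
    fun h => Or.inr (Or.inr (Or.inr (Or.inl h)))
  have stepE : ∀ {a b}, PrioE A B C D E a b → PrioStep A B C D E a b :=
    fun h => Or.inr (Or.inr (Or.inr (Or.inr h)))
  have back : ∀ a b : α, (∃ x y z : α, ReflTransGen A a x ∧ ReflTransGen (PrioB A B) x y ∧
      ReflTransGen (PrioC A B C) y z ∧
      (ReflGen (PrioD A B C D) z b ∨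
        ∃ w : α, ReflGen (PrioE A B C D E) z w ∧ ReflTransGen A w b)) →
      ReflTransGen (PrioStep A B C D E) a b := by
    rintro a b ⟨x, y, z, hax, hxy, hyz, hlast⟩
    have h1 : ReflTransGen (PrioStep A B C D E) a x := ReflTransGen.mono (p := PrioStep A B C D E) (fun _ _ => stepA) _ _ hax
    have h2 : ReflTransGen (PrioStep A B C D E) x y := ReflTransGen.mono (p := PrioStep A B C D E) (fun _ _ => stepB) _ _ hxy
    have h3 : ReflTransGen (PrioStep A B C D E) y z := ReflTransGen.mono (p := PrioStep A B C D E) (fun _ _ => stepC) _ _ hyz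
    have h4 : ReflTransGen (PrioStep A B C D E) z b := by
      rcases hlast with h | ⟨w, hzw, hwb⟩
      · exact ReflTransGen.mono (p := PrioStep A B C D E) (fun _ _ => stepD) _ _ h.to_reflTransGen
      · exact (ReflTransGen.mono (p := PrioStep A B C D E) (fun _ _ => stepE) _ _ hzw.to_reflTransGen).trans
          (ReflTransGen.mono (p := PrioStep A B C D E) (fun _ _ => stepA) _ _ hwb)
    exact ((h1.trans h2).trans h3).trans h4
  intro a b
  constructor
  · intro h
    induction h using ReflTransGen.head_induction_on with
    | refl => exact ⟨b, b, b, .refl, .refl, .refl, Or.inl .refl⟩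
    | head hstep _ ih =>
      rename_i a c _
      obtain ⟨x, y, z, hcx, hxy, hyz, hlast⟩ := ih
      rcases hstep with hA | hB | hC | hDs | hEs
      · exact ⟨x, y, z, .head hA hcx, hxy, hyz, hlast⟩
      · rcases hcx.cases_head with rfl | ⟨x1, hstep1, _⟩
        · exact ⟨a, y, z, .refl, .head hB hxy, hyz, hlast⟩
        · exact absurd hstep1 (fun h => hBA a c x1 hB h)
      · rcases hcx.cases_head with rfl | ⟨x1, hstep1, _⟩
        · rcases hxy.cases_head with rfl | ⟨x1, hstep1, _⟩
          · exact ⟨a, a, z, .refl, .refl, .head hC hyz, hlast⟩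
          · exact absurd hstep1 (fun h => hCB a c x1 hC h)
        · exact absurd hstep1 (fun h => hCA a c x1 hC h)
      · have hcb : ReflTransGen (PrioStep A B C D E) c b := back c b ⟨x, y, z, hcx, hxy, hyz, hlast⟩
        rcases hcb.cases_head with rfl | ⟨c1, hstep1, _⟩
        · exact ⟨a, a, a, .refl, .refl, .refl, Or.inl (.single hDs)⟩
        · exact absurd hstep1 (fun h => hD a c c1 hDs h)
      · rcases hxy.cases_head with rfl | ⟨x1, hstep1, _⟩
        · rcases hyz.cases_head with rfl | ⟨x1, hstep1, _⟩
          · rcases hlast with hzb | ⟨w, hzw, hwb⟩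
            · rcases hzb with _ | hd
              · exact ⟨a, a, a, .refl, .refl, .refl, Or.inr ⟨c, .single hEs, hcx⟩⟩
              · exact absurd hd (fun h => hEAD a c x _ hEs hcx h)
            · rcases hzw with _ | he
              · exact ⟨a, a, a, .refl, .refl, .refl, Or.inr ⟨c, .single hEs, hcx.trans hwb⟩⟩
              · exact absurd he (fun h => hEAE a c x _ hEs hcx h)
          · exact absurd hstep1 (fun h => hEAC a c x x1 hEs hcx h)
        · exact absurd hstep1 (fun h => hEAB a c x x1 hEs hcx h)
  · exact back a b
end

section
/- For lists over a type with a distinguished reduction relation on elements: if σ = [s₁, …, sₙ] and the 'standard reduction' of σ reduces the leftmost reducible element, then deleting any fixed set of positions from σ commutes with standard reduction up to reflexivity: the standard reduct of the sublist is either equal to the sublist, or obtained by deleting the same positions from the standard reduct of σ. -/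
variable {α : Type*}

/-- Standard reduction of a list: reduce the leftmost reducible entry. -/
inductive ListStep (s : α → α → Prop) : List α → List α → Prop
  | head {a b : α} {l : List α} : s a b → ListStep s (a :: l) (b :: l)
  | tail {a : α} {l l' : List α} : (∀ b, ¬ s a b) → ListStep s l l' →
      ListStep s (a :: l) (a :: l')

/-- Delete the entries of a list at a fixed set of positions. -/
def deletePos (I : Finset ℕ) (l : List α) : List α :=
  (l.zipIdx.filter fun p => p.2 ∉ I).map Prod.fst

/-- Shift a set of positions down by one, dropping position 0. -/
def shiftPos (I : Finset ℕ) : Finset ℕ := (I.erase 0).image (· - 1)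

lemma mem_shiftPos (I : Finset ℕ) (n : ℕ) : n ∈ shiftPos I ↔ n + 1 ∈ I := by
  simp only [shiftPos, Finset.mem_image, Finset.mem_erase]
  constructor
  · rintro ⟨m, ⟨hm0, hm⟩, rfl⟩
    rwa [Nat.sub_add_cancel (Nat.one_le_iff_ne_zero.mpr hm0)]
  · intro h
    exact ⟨n + 1, ⟨by omega, h⟩, by omega⟩

lemma deletePos_cons (I : Finset ℕ) (a : α) (l : List α) :
    deletePos I (a :: l) =
      if 0 ∈ I then deletePos (shiftPos I) l else a :: deletePos (shiftPos I) l := by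
  by_cases h0 : 0 ∈ I <;>
    simp [deletePos, List.zipIdx_cons', List.filter_cons,
      List.filter_map, List.map_map, Function.comp, Prod.map, h0, mem_shiftPos] <;>
  · have h1 : (Prod.fst ∘ Prod.map (id : α → α) (fun x => x + 1)) = Prod.fst :=
      funext fun ⟨x, i⟩ => rfl
    have h2 : ((fun p : α × ℕ => !decide (p.2 ∈ I)) ∘ Prod.map id (fun x => x + 1)) =
        (fun p : α × ℕ => !decide (p.2 + 1 ∈ I)) := funext fun ⟨x, i⟩ => rfl
    rw [show l.zipIdx 1 = (l.zipIdx 0).map (Prod.map id (· + 1)) from List.zipIdx_succ,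
      List.filter_map, List.map_map, h1, h2]

/-- Deleting a fixed set of positions commutes with standard (leftmost)
reduction of lists, up to reflexivity: the result of deleting the positions
from the standard reduct is either the deleted list itself or its standard
reduct. -/
theorem deletePos_listStep (red sred : α → α → Prop)
    (hsub : ∀ a b, sred a b → red a b)
    (hdet : ∀ a b b', sred a b → sred a b' → b = b')
    (I : Finset ℕ) (σ σ' : List α) (h : ListStep sred σ σ') :
    deletePos I σ = deletePos I σ' ∨ ListStep sred (deletePos I σ) (deletePos I σ') := by
  induction h generalizing I with
  | @head a b l hab =>
    rw [deletePos_cons, deletePos_cons]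
    by_cases h0 : 0 ∈ I
    · rw [if_pos h0, if_pos h0]
      exact Or.inl rfl
    · simp only [if_neg h0]
      exact Or.inr (ListStep.head hab)
  | @tail a l l' ha _ ih =>
    rw [deletePos_cons, deletePos_cons]
    by_cases h0 : 0 ∈ I
    · simpa only [if_pos h0] using ih (shiftPos I)
    · simp only [if_neg h0]
      rcases ih (shiftPos I) with h | h
      · exact Or.inl (by rw [h])
      · exact Or.inr (ListStep.tail ha h)
end

section
/- In a Dyck-word representation of pasting contexts, excising two distinct peaks commutes: if p and q are distinct peaks of a Dyck word d (neither contained in the portion removed by the other), then excising p and then the transported q yields the same Dyck word as excising q and then the transported p. -/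
/-- Dyck words of excess `n`. -/
inductive Dyck : ℕ → Type
  | base : Dyck 0
  | up {n : ℕ} : Dyck n → Dyck (n + 1)
  | down {n : ℕ} : Dyck (n + 1) → Dyck n

/-- Peaks of a Dyck word: an up-move immediately followed by a down-move. -/
inductive Dyck.Peak : ∀ {n : ℕ}, Dyck n → Type
  | here {n : ℕ} (d : Dyck n) : Peak (d.up.down)
  | up {n : ℕ} {d : Dyck n} : Peak d → Peak d.up
  | down {n : ℕ} {d : Dyck (n + 1)} : Peak d → Peak d.down

/-- Excision of a peak. -/
def Dyck.excise : ∀ {n : ℕ} {d : Dyck n}, d.Peak → Dyck n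
  | _, _, .here d => d
  | _, _, .up p => (excise p).up
  | _, _, .down p => (excise p).down

/-- Transport of the peak `q` along excision of the peak `p`; it is `none`
exactly when the two peaks coincide. -/
def Dyck.transport : ∀ {n : ℕ} {d : Dyck n} (p : d.Peak), d.Peak → Option (Dyck.excise p).Peak
  | _, _, .here _, .here _ => none
  | _, _, .here _, .down (.up q) => some q
  | _, _, .up p, .up q => (transport p q).map .up
  | _, _, .down (.up p), .here _ => some (.here (Dyck.excise p))
  | _, _, .down p, .down q => (transport p q).map .down

lemma Dyck.transport_up {n : ℕ} {d : Dyck n} (p q : d.Peak) :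
    Dyck.transport p.up q.up = (Dyck.transport p q).map .up := rfl

lemma Dyck.transport_down {n : ℕ} {d : Dyck (n + 1)} (p q : d.Peak) :
    Dyck.transport p.down q.down = (Dyck.transport p q).map .down := by
  cases p with
  | here => rfl
  | up => rfl
  | down => rfl

/-- Excising two distinct peaks commutes: excising `p` and then the transported
copy of `q` yields the same Dyck word as excising `q` and then the transported
copy of `p`. -/
theorem excise_excise_comm {n : ℕ} (d : Dyck n) (p q : d.Peak) (hpq : p ≠ q) :
    ∃ (q' : (Dyck.excise p).Peak) (p' : (Dyck.excise q).Peak),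
      Dyck.transport p q = some q' ∧ Dyck.transport q p = some p' ∧
      Dyck.excise q' = Dyck.excise p' := by
  induction d with
  | base => cases p
  | up e ih =>
    cases p with
    | up p₀ =>
      cases q with
      | up q₀ =>
        have h : p₀ ≠ q₀ := fun h => hpq (by rw [h])
        obtain ⟨q', p', h1, h2, h3⟩ := ih p₀ q₀ h
        exact ⟨.up q', .up p', by simp [Dyck.transport_up, Dyck.transport_down, h1]; rfl,
          by simp [Dyck.transport_up, Dyck.transport_down, h2]; rfl, by simp [Dyck.excise, h3]⟩
  | down e ih =>
    cases p with
    | here d₀ =>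
      cases q with
      | here => exact absurd rfl hpq
      | down q₁ =>
        cases q₁ with
        | up q₀ =>
          exact ⟨q₀, .here (Dyck.excise q₀), rfl, rfl, rfl⟩
    | down p₁ =>
      cases q with
      | here d₀ =>
        cases p₁ with
        | up p₀ =>
          exact ⟨.here (Dyck.excise p₀), p₀, rfl, rfl, rfl⟩
      | down q₁ =>
        have h : p₁ ≠ q₁ := fun h => hpq (by rw [h])
        obtain ⟨q', p', h1, h2, h3⟩ := ih p₁ q₁ h
        exact ⟨.down q', .down p', by simp [Dyck.transport_up, Dyck.transport_down, h1]; rfl,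
          by simp [Dyck.transport_up, Dyck.transport_down, h2]; rfl, by simp [Dyck.excise, h3]⟩
end

section
/- Any presheaf on a small category that sends a specified class of limits to colimits is determined up to isomorphism by its restriction along a full, bijective-on-objects functor that preserves those limits; concretely: if K : A → B is bijective on objects, full, and preserves the specified limits, then the restriction functor from limit-to-colimit-sending presheaves on B to those on A is fully faithful. -/
open CategoryTheory CategoryTheory.Limits

/-- Let `K : A ⥤ B` be bijective on objects and full, and let a class of limit
cones `c i` in `A` be specified, each preserved by `K` (so the specified class
in `B` consists of the cones `K.mapCone (c i)`).  Then for presheaves `P, Q` on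
`B` sending the specified limits to colimits in `Set`, precomposition with `K`
is bijective on natural transformations; i.e. the restriction functor between
the categories of limit-to-colimit-sending presheaves is fully faithful. -/
theorem restriction_fully_faithful_of_bij_full {A B : Type*}
    [Category A] [Category B]
    (K : A ⥤ B) (hbij : Function.Bijective K.obj) (hfull : K.Full)
    {ι : Type*} (J : ι → Type*) [∀ i, Category (J i)]
    (F : ∀ i, J i ⥤ A) (c : ∀ i, Cone (F i))
    (hlim : ∀ i, Nonempty (IsLimit (c i)))
    (hKlim : ∀ i, Nonempty (IsLimit (K.mapCone (c i))))
    (P Q : Bᵒᵖ ⥤ Type _)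
    (hP : ∀ i, Nonempty (IsColimit (P.mapCocone (K.mapCone (c i)).op)))
    (hQ : ∀ i, Nonempty (IsColimit (Q.mapCocone (K.mapCone (c i)).op))) :
    Function.Bijective (fun η : P ⟶ Q => CategoryTheory.Functor.whiskerLeft K.op η) := by
  have hg : ∀ b : B, K.obj (Function.surjInv hbij.2 b) = b :=
    Function.surjInv_eq hbij.2
  set g := Function.surjInv hbij.2 with hgdef
  have hga : ∀ a : A, g (K.obj a) = a := fun a => hbij.1 (hg _)
  have eb : ∀ b : Bᵒᵖ, Opposite.op (K.obj (g b.unop)) = b := by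
    intro b
    rw [hg, Opposite.op_unop]
  constructor
  · intro η₁ η₂ h
    ext b x
    obtain ⟨b⟩ := b
    obtain ⟨a, rfl⟩ := hbij.2 b
    exact congrFun (congrArg (fun t => t.app (Opposite.op a)) h) x
  · intro θ
    refine ⟨⟨fun b => P.map (eqToHom (eb b).symm) ≫ θ.app (Opposite.op (g b.unop)) ≫
        Q.map (eqToHom (eb b)), ?_⟩, ?_⟩
    · intro b b' f
      obtain ⟨u, hu⟩ := hfull.1
        ((eqToHom (eb b) ≫ f ≫ eqToHom (eb b').symm).unop)
      have hnat := θ.naturality u.op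
      dsimp at hnat ⊢
      have hf : f = eqToHom (eb b).symm ≫ (K.map u).op ≫ eqToHom (eb b') := by
        rw [hu]
        simp
      rw [hf]
      simp only [Functor.map_comp, Category.assoc, eqToHom_map, eqToHom_trans,
        eqToHom_trans_assoc, eqToHom_refl, Category.id_comp, Category.comp_id]
      rw [reassoc_of% hnat]
    · have key : ∀ (x y : Aᵒᵖ) (h : x = y), θ.app x =
          (K.op ⋙ P).map (eqToHom h) ≫ θ.app y ≫ (K.op ⋙ Q).map (eqToHom h.symm) := by
        rintro x y rfl
        simp
      apply NatTrans.ext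
      funext b
      obtain ⟨a⟩ := b
      dsimp
      rw [key _ _ (congrArg Opposite.op (hga a))]
      simp [eqToHom_map]
end
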